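/- Let S be a random variable with S/σ² ~ χ²_n (chi-squared with n degrees of freedom, σ > 0), and let g : (0,∞) → ℝ be continuously differentiable with E|S g(S)| < ∞ and E|S g'(S)| < ∞. Then E[S g(S)] = σ² E[n g(S) + 2 S g'(S)]. -/

import Mathlib

open MeasureTheory ProbabilityTheory Set Filter Topology
open scoped ENNReal NNReal

/-- Abstract Stein/IBP identity on `(0, ∞)` for a weight `p` with `(v p)' = (a - v/2) p`. -/
lemma gamma_ibp_core (a : ℝ) (p h h' : ℝ → ℝ)
    (hvp : ∀ v ∈ Set.Ioi (0:ℝ), HasDerivAt (fun w => w * p w) ((a - 1/2 * v) * p v) v)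
    (hd : ∀ v ∈ Set.Ioi (0:ℝ), HasDerivAt h (h' v) v)
    (I1 : IntegrableOn (fun v => v * p v * h v) (Set.Ioi 0))
    (I2 : IntegrableOn (fun v => v * p v * h' v) (Set.Ioi 0))
    (I3 : IntegrableOn (fun v => p v * h v) (Set.Ioi 0)) :
    ∫ v in Set.Ioi (0:ℝ), v * p v * h v
      = 2*a * (∫ v in Set.Ioi (0:ℝ), p v * h v)
        + 2 * (∫ v in Set.Ioi (0:ℝ), v * p v * h' v) := by
  -- derivative of F := v p h is G := (a - v/2) p h + v p h'
  have hFd : ∀ v ∈ Set.Ioi (0:ℝ),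
      HasDerivAt (fun w => w * p w * h w)
        ((a - 1/2 * v) * p v * h v + v * p v * h' v) v := by
    intro v hv
    exact (hvp v hv).mul (hd v hv)
  have hGint : IntegrableOn (fun v => (a - 1/2 * v) * p v * h v + v * p v * h' v)
      (Set.Ioi 0) := by
    have base := ((I3.const_mul a).sub (I1.const_mul (1/2))).add I2
    exact base.congr (ae_of_all _ (fun v => by
      simp only [Pi.add_apply, Pi.sub_apply]; ring))
  -- limit at infinity
  have htop : Tendsto (fun w => w * p w * h w) atTop (𝓝 0) :=
    tendsto_zero_of_hasDerivAt_of_integrableOn_Ioi hFd hGint I1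
  -- limit at 0⁺ exists
  have hGint01 : IntegrableOn (fun v => (a - 1/2 * v) * p v * h v + v * p v * h' v)
      (Set.Ioc 0 1) := hGint.mono_set Set.Ioc_subset_Ioi_self
  set G : ℝ → ℝ := fun v => (a - 1/2 * v) * p v * h v + v * p v * h' v with hGdef
  have cover : AECover (volume.restrict (Set.Ioc (0:ℝ) 1)) (𝓝[>] (0:ℝ))
      (fun x => Set.Ioc x 1) := by
    constructor
    · rw [ae_restrict_iff' measurableSet_Ioc]
      filter_upwards with t ht
      filter_upwards [nhdsWithin_le_nhds (Iio_mem_nhds ht.1)] with x hx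
      exact ⟨hx, ht.2⟩
    · exact fun x => measurableSet_Ioc
  have tint : Tendsto (fun x => ∫ t in Set.Ioc x 1, G t ∂(volume.restrict (Set.Ioc 0 1)))
      (𝓝[>] (0:ℝ)) (𝓝 (∫ t in Set.Ioc (0:ℝ) 1, G t)) :=
    cover.integral_tendsto_of_countably_generated hGint01
  have tint' : Tendsto (fun x => ∫ t in x..1, G t) (𝓝[>] (0:ℝ))
      (𝓝 (∫ t in Set.Ioc (0:ℝ) 1, G t)) := by
    apply tint.congr'
    filter_upwards [self_mem_nhdsWithin, nhdsWithin_le_nhds (Iio_mem_nhds one_pos)]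
      with x hx hx1
    rw [Measure.restrict_restrict measurableSet_Ioc,
      Set.inter_eq_self_of_subset_left (Set.Ioc_subset_Ioc_left (le_of_lt hx)),
      intervalIntegral.integral_of_le (le_of_lt hx1)]
  have hFx : (fun w => w * p w * h w)
      =ᶠ[𝓝[>] (0:ℝ)] fun x => 1 * p 1 * h 1 - ∫ t in x..1, G t := by
    filter_upwards [self_mem_nhdsWithin, nhdsWithin_le_nhds (Iio_mem_nhds one_pos)]
      with x hx hx1
    have hx0 : (0:ℝ) < x := hx
    have key : ∫ t in x..1, G t
        = (fun w => w * p w * h w) 1 - (fun w => w * p w * h w) x := by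
      refine intervalIntegral.integral_eq_sub_of_hasDerivAt
        (f := fun w => w * p w * h w) (f' := G) ?_ ?_
      · intro t ht
        rw [Set.uIcc_of_le (le_of_lt hx1)] at ht
        exact hFd t (lt_of_lt_of_le hx0 ht.1)
      · rw [intervalIntegrable_iff_integrableOn_Ioc_of_le (le_of_lt hx1)]
        exact hGint01.mono_set (Set.Ioc_subset_Ioc_left (le_of_lt hx))
    simp only [] at key
    rw [key]; ring
  set L : ℝ := 1 * p 1 * h 1 - ∫ t in Set.Ioc (0:ℝ) 1, G t with hLdef
  have hbot : Tendsto (fun w => w * p w * h w) (𝓝[>] (0:ℝ)) (𝓝 L) :=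
    Tendsto.congr' hFx.symm (tendsto_const_nhds.sub tint')
  -- the limit at 0⁺ is 0
  have hL : L = 0 := by
    by_contra hL0
    have habs : (0:ℝ) < |L| := abs_pos.mpr hL0
    have hnorm : Tendsto (fun v => ‖v * p v * h v‖) (𝓝[>] (0:ℝ)) (𝓝 |L|) := by
      simpa [Real.norm_eq_abs] using hbot.norm
    have hev : ∀ᶠ v in 𝓝[>] (0:ℝ), |L|/2 < ‖v * p v * h v‖ :=
      hnorm.eventually_const_lt (half_lt_self habs)
    obtain ⟨u, hu, hsub⟩ := mem_nhdsGT_iff_exists_Ioo_subset.mp hev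
    have hu0 : (0:ℝ) < u := hu
    have hmono : IntegrableOn (fun v => |L|/2 * v ^ (-1:ℝ)) (Set.Ioo 0 u) := by
      apply Integrable.mono (I3.mono_set (fun v hv => hv.1))
      · exact (((measurable_id.pow_const _).const_mul _).aestronglyMeasurable).restrict
      · rw [ae_restrict_iff' measurableSet_Ioo]
        filter_upwards with v hv
        have hv0 : (0:ℝ) < v := hv.1
        have h1 : |L|/2 < ‖v * p v * h v‖ := hsub hv
        have h2 : ‖v * p v * h v‖ = v * ‖p v * h v‖ := by
          rw [Real.norm_eq_abs, Real.norm_eq_abs, mul_assoc, abs_mul, abs_of_pos hv0]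
        have h3 : |L|/2 * v⁻¹ ≤ ‖p v * h v‖ := by
          rw [← div_eq_mul_inv, div_le_iff₀ hv0]
          rw [h2] at h1
          nlinarith
        have h4 : ‖|L|/2 * v ^ (-1:ℝ)‖ = |L|/2 * v⁻¹ := by
          rw [Real.rpow_neg_one, Real.norm_eq_abs, abs_mul,
            abs_of_nonneg (by positivity : (0:ℝ) ≤ |L|/2),
            abs_of_nonneg (inv_nonneg.mpr hv0.le)]
        rw [h4]
        exact h3
    have hni : IntegrableOn (fun v : ℝ => v ^ (-1:ℝ)) (Set.Ioo 0 u) := by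
      have h2 := hmono.const_mul (2 / |L|)
      apply h2.congr
      filter_upwards with v
      field_simp
    rw [intervalIntegral.integrableOn_Ioo_rpow_iff hu0] at hni
    linarith
  -- continuity within Ici 0 at 0
  have hF0 : (0:ℝ) * p 0 * h 0 = 0 := by ring
  have hcont : ContinuousWithinAt (fun w => w * p w * h w) (Set.Ici 0) 0 := by
    rw [← Set.Ioi_insert, continuousWithinAt_insert_self]
    have hFL : (0:ℝ) * p 0 * h 0 = L := by rw [hL]; ring
    show Tendsto (fun w => w * p w * h w) (𝓝[Set.Ioi 0] 0) (𝓝 ((0:ℝ) * p 0 * h 0))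
    rw [hFL]
    exact hbot
  -- FTC
  have hFTC : ∫ v in Set.Ioi (0:ℝ), ((a - 1/2 * v) * p v * h v + v * p v * h' v)
      = 0 - (0:ℝ) * p 0 * h 0 :=
    MeasureTheory.integral_Ioi_of_hasDerivAt_of_tendsto hcont hFd hGint htop
  rw [hF0, sub_zero] at hFTC
  -- expand
  have hGA : IntegrableOn (fun v => (a - 1/2 * v) * p v * h v) (Set.Ioi 0) := by
    have base := (I3.const_mul a).sub (I1.const_mul (1/2))
    exact base.congr (ae_of_all _ (fun v => by
      simp only [Pi.sub_apply]; ring))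
  have hsplit : ∫ v in Set.Ioi (0:ℝ), ((a - 1/2 * v) * p v * h v + v * p v * h' v)
      = (∫ v in Set.Ioi (0:ℝ), (a - 1/2 * v) * p v * h v)
        + (∫ v in Set.Ioi (0:ℝ), v * p v * h' v) := integral_add hGA I2
  have hsplit2 : ∫ v in Set.Ioi (0:ℝ), (a - 1/2 * v) * p v * h v
      = a * (∫ v in Set.Ioi (0:ℝ), p v * h v)
        - 1/2 * (∫ v in Set.Ioi (0:ℝ), v * p v * h v) := by
    have e : (fun v => (a - 1/2 * v) * p v * h v)
        = fun v => a * (p v * h v) - 1/2 * (v * p v * h v) := by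
      funext v; ring
    rw [e, integral_sub (I3.const_mul a) (I1.const_mul (1/2)),
      integral_const_mul, integral_const_mul]
  rw [hsplit, hsplit2] at hFTC
  linear_combination (-2 : ℝ) * hFTC

/-- derivative of `w ↦ w · (C w^{a-1} e^{-w/2})` is `(a - w/2) · (C w^{a-1} e^{-w/2})`. -/
lemma weight_hasDerivAt (a C v : ℝ) (hv : 0 < v) :
    HasDerivAt (fun w => w * (C * w ^ (a-1) * Real.exp (-(1/2 * w))))
      ((a - 1/2 * v) * (C * v ^ (a-1) * Real.exp (-(1/2 * v)))) v := by
  have dpow : HasDerivAt (fun w : ℝ => w ^ a) (a * v ^ (a-1)) v :=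
    Real.hasDerivAt_rpow_const (Or.inl (ne_of_gt hv))
  have dexp : HasDerivAt (fun w : ℝ => Real.exp (-(1/2 * w)))
      (Real.exp (-(1/2 * v)) * (-(1/2))) v := by
    have : HasDerivAt (fun w : ℝ => -(1/2 * w)) (-(1/2)) v := by
      exact ((hasDerivAt_id v).const_mul (1/2:ℝ)).neg.congr_deriv (by ring)
    exact this.exp
  have daux := (dpow.const_mul C).mul dexp
  have heq : HasDerivAt (fun w => C * w ^ a * Real.exp (-(1/2 * w)))
      ((a - 1/2 * v) * (C * v ^ (a-1) * Real.exp (-(1/2 * v)))) v := by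
    refine daux.congr_deriv ?_
    have hva : v ^ a = v ^ (a-1) * v := by
      rw [← Real.rpow_add_one (ne_of_gt hv)]; ring_nf
    rw [hva]; ring
  apply heq.congr_of_eventuallyEq
  filter_upwards [isOpen_Ioi.mem_nhds hv] with w (hw : 0 < w)
  have hwa : w ^ a = w ^ (a-1) * w := by
    rw [← Real.rpow_add_one (ne_of_gt hw)]; ring_nf
  rw [hwa]; ring

lemma gamma_transport_integral (a r c : ℝ) (ha : 0 < a) (hr : 0 < r) (hc : c ≠ 0)
    (f : ℝ → ℝ) :
    ∫ s, f s ∂((gammaMeasure a r).map (fun v => c * v))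
      = ∫ v, gammaPDFReal a r v * f (c * v) := by
  have hemb : MeasurableEmbedding (fun v : ℝ => c * v) :=
    (Homeomorph.mulLeft₀ c hc).measurableEmbedding
  rw [hemb.integral_map]
  have hmeq : gammaMeasure a r
      = volume.withDensity (fun x => ((Real.toNNReal (gammaPDFReal a r x) : ℝ≥0) : ℝ≥0∞)) := rfl
  rw [hmeq, integral_withDensity_eq_integral_smul
    ((measurable_gammaPDFReal a r).real_toNNReal) (fun v => f (c * v))]
  congr 1
  funext v
  rw [NNReal.smul_def, smul_eq_mul, Real.coe_toNNReal _ (gammaPDFReal_nonneg ha hr v)]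

lemma gamma_transport_integrable (a r c : ℝ) (ha : 0 < a) (hr : 0 < r) (hc : c ≠ 0)
    (f : ℝ → ℝ) (hf : Integrable f ((gammaMeasure a r).map (fun v => c * v))) :
    Integrable (fun v => gammaPDFReal a r v * f (c * v)) := by
  have hemb : MeasurableEmbedding (fun v : ℝ => c * v) :=
    (Homeomorph.mulLeft₀ c hc).measurableEmbedding
  rw [hemb.integrable_map_iff] at hf
  have hmeq : gammaMeasure a r
      = volume.withDensity (fun x => ((Real.toNNReal (gammaPDFReal a r x) : ℝ≥0) : ℝ≥0∞)) := rfl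
  rw [hmeq, integrable_withDensity_iff_integrable_coe_smul
    ((measurable_gammaPDFReal a r).real_toNNReal)] at hf
  apply hf.congr
  filter_upwards with v
  rw [Real.coe_toNNReal _ (gammaPDFReal_nonneg ha hr v)]
  rfl

lemma ae_ne_zero : ∀ᵐ (v : ℝ), v ≠ (0:ℝ) := by
  rw [ae_iff]
  have : {v : ℝ | ¬ v ≠ 0} = {(0:ℝ)} := by ext v; simp
  rw [this]
  exact Real.volume_singleton

lemma gamma_restrict_integral (a r : ℝ) (f : ℝ → ℝ) :
    ∫ v, gammaPDFReal a r v * f v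
      = ∫ v in Set.Ioi (0:ℝ), (r ^ a / Real.Gamma a * v ^ (a-1) * Real.exp (-(r * v))) * f v := by
  rw [← setIntegral_eq_integral_of_ae_compl_eq_zero (s := Set.Ioi (0:ℝ))]
  · apply setIntegral_congr_fun measurableSet_Ioi
    intro v (hv : 0 < v)
    simp only [gammaPDFReal, if_pos hv.le]
  · filter_upwards [ae_ne_zero] with v hv0 hv
    have hneg : v < 0 := lt_of_le_of_ne (not_lt.mp hv) hv0
    simp only [gammaPDFReal, if_neg (not_le.mpr hneg), zero_mul]

lemma gamma_restrict_integrable (a r : ℝ) (f : ℝ → ℝ)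
    (hf : Integrable (fun v => gammaPDFReal a r v * f v)) :
    IntegrableOn (fun v => (r ^ a / Real.Gamma a * v ^ (a-1) * Real.exp (-(r * v))) * f v)
      (Set.Ioi (0:ℝ)) := by
  apply (hf.integrableOn (s := Set.Ioi 0)).congr
  rw [Filter.eventuallyEq_iff_exists_mem]
  exact ⟨Set.Ioi 0, self_mem_ae_restrict measurableSet_Ioi,
    fun v (hv : 0 < v) => by simp only [gammaPDFReal, if_pos hv.le]⟩


theorem stmt_7 (n : ℕ) (hn : 1 ≤ n) (σ : ℝ) (hσ : 0 < σ) (g : ℝ → ℝ)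
    (hg : ContDiffOn ℝ 1 g (Set.Ioi 0))
    -- the law of `S`, where `S / σ²` is chi-squared with `n` degrees of freedom
    (ν : Measure ℝ)
    (hν : ν = (gammaMeasure ((n : ℝ) / 2) (1 / 2)).map (fun v => σ ^ 2 * v))
    (hint1 : Integrable (fun s => s * g s) ν)
    (hint2 : Integrable (fun s => s * deriv g s) ν)
    (hint3 : Integrable g ν) :
    ∫ s, s * g s ∂ν = σ ^ 2 * ∫ s, ((n : ℝ) * g s + 2 * s * deriv g s) ∂ν := by
  have ha : (0:ℝ) < (n:ℝ)/2 := by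
    have : (0:ℝ) < (n:ℝ) := by exact_mod_cast Nat.lt_of_lt_of_le Nat.zero_lt_one hn
    linarith
  have hr : (0:ℝ) < 1/2 := by norm_num
  have hc2 : (0:ℝ) < σ^2 := by positivity
  have hc : (σ^2 : ℝ) ≠ 0 := ne_of_gt hc2
  set a : ℝ := (n:ℝ)/2 with hadef
  -- the concrete weight
  set C : ℝ := (1/2:ℝ) ^ a / Real.Gamma a with hCdef
  set P : ℝ → ℝ := fun v => C * v ^ (a-1) * Real.exp (-(1/2 * v)) with hPdef
  -- transported integrability
  have tr : ∀ f : ℝ → ℝ, Integrable f ν →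
      IntegrableOn (fun v => P v * f (σ^2 * v)) (Set.Ioi 0) := by
    intro f hf
    rw [hν] at hf
    have h1 := gamma_transport_integrable a (1/2) (σ^2) ha hr hc f hf
    have h2 := gamma_restrict_integrable a (1/2) (fun v => f (σ^2 * v)) h1
    apply h2.congr
    filter_upwards with v
    simp only [hPdef, hCdef]
  have tri : ∀ f : ℝ → ℝ,
      ∫ s, f s ∂ν = ∫ v in Set.Ioi (0:ℝ), P v * f (σ^2 * v) := by
    intro f
    rw [hν, gamma_transport_integral a (1/2) (σ^2) ha hr hc f,
      gamma_restrict_integral a (1/2) (fun v => f (σ^2 * v))]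
  -- instantiate the core lemma
  have hgd : ∀ v ∈ Set.Ioi (0:ℝ),
      HasDerivAt (fun w => g (σ^2 * w)) (σ^2 * deriv g (σ^2 * v)) v := by
    intro v (hv : 0 < v)
    have hpos : (0:ℝ) < σ^2 * v := by positivity
    have hdg : DifferentiableAt ℝ g (σ^2 * v) :=
      (hg.differentiableOn one_ne_zero).differentiableAt (isOpen_Ioi.mem_nhds hpos)
    have hin : HasDerivAt (fun w : ℝ => σ^2 * w) (σ^2) v := by
      simpa using (hasDerivAt_id v).const_mul (σ^2)
    rw [mul_comm]
    exact HasDerivAt.comp v hdg.hasDerivAt hin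
  have J1 := tr _ hint1
  have J2 := tr _ hint2
  have J3 := tr _ hint3
  have I1 : IntegrableOn (fun v => v * P v * g (σ^2 * v)) (Set.Ioi 0) := by
    apply (J1.const_mul ((σ^2)⁻¹)).congr
    filter_upwards with v
    field_simp
  have I2 : IntegrableOn (fun v => v * P v * (σ^2 * deriv g (σ^2 * v))) (Set.Ioi 0) := by
    apply J2.congr
    filter_upwards with v
    ring
  have I3 : IntegrableOn (fun v => P v * g (σ^2 * v)) (Set.Ioi 0) := J3
  have hvp : ∀ v ∈ Set.Ioi (0:ℝ),
      HasDerivAt (fun w => w * P w) ((a - 1/2 * v) * P v) v := by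
    intro v (hv : 0 < v)
    exact weight_hasDerivAt a C v hv
  have core := gamma_ibp_core a P (fun w => g (σ^2 * w))
    (fun v => σ^2 * deriv g (σ^2 * v)) hvp hgd I1 I2 I3
  -- put everything together
  have hLHS : ∫ s, s * g s ∂ν
      = σ^2 * (∫ v in Set.Ioi (0:ℝ), v * P v * g (σ^2 * v)) := by
    rw [tri (fun s => s * g s)]
    have e : (fun v => P v * (σ^2 * v * g (σ^2 * v)))
        = fun v => σ^2 * (v * P v * g (σ^2 * v)) := by funext v; ring
    rw [e, integral_const_mul]
  have hRHS : ∫ s, ((n : ℝ) * g s + 2 * s * deriv g s) ∂ν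
      = (n:ℝ) * (∫ v in Set.Ioi (0:ℝ), P v * g (σ^2 * v))
        + 2 * (∫ v in Set.Ioi (0:ℝ), v * P v * (σ^2 * deriv g (σ^2 * v))) := by
    rw [tri (fun s => (n : ℝ) * g s + 2 * s * deriv g s)]
    have e : (fun v => P v * ((n:ℝ) * g (σ^2 * v) + 2 * (σ^2 * v) * deriv g (σ^2 * v)))
        = fun v => (n:ℝ) * (P v * g (σ^2 * v))
            + 2 * (v * P v * (σ^2 * deriv g (σ^2 * v))) := by funext v; ring
    rw [e, integral_add (I3.const_mul ((n:ℝ))) (I2.const_mul 2),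
      integral_const_mul, integral_const_mul]
  have h2a : 2 * a = (n:ℝ) := by rw [hadef]; ring
  rw [hLHS, hRHS, core, h2a]
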